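/- Suppose in addition that g·(f″)² is not identically zero on [X_0, X_n] (so that α_h > 0 for every choice of interior points). Then there exists a constant C > 0, depending only on f, g, X_0 and X_n but not on n or on the interior points X_1,…,X_{n−1}, such that for every n ≥ 1 and every choice of interior points X_1 < ⋯ < X_{n−1} satisfying the equidistribution equation with γ = 2/5, one has sqrt( Σ_{i=0}^{n−1} ∫_{X_i}^{X_{i+1}} (L_i(S) − f(S))² g(S) dS ) ≤ C n^{−2}. -/

import Mathlib

open MeasureTheory intervalIntegral

/-- `Ĝ_i` transported to the subinterval `[a, b]`:
`G(S) = Ĝ_i((S - a)/(b - a))` where `ĝ_i(ξ) = g(a + (b - a)ξ)` and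
`Ĝ_i(t) = ∫_0^t ĝ_i(ξ) ξ²(1-ξ)³/3 dξ + ∫_t^1 ĝ_i(ξ) (1-ξ)²ξ³/3 dξ`. -/
noncomputable def weightG (g : ℝ → ℝ) (a b S : ℝ) : ℝ :=
    (∫ ξ in (0:ℝ)..((S - a) / (b - a)), g (a + (b - a) * ξ) * (ξ ^ 2 * (1 - ξ) ^ 3 / 3))
  + (∫ ξ in ((S - a) / (b - a))..(1:ℝ), g (a + (b - a) * ξ) * ((1 - ξ) ^ 2 * ξ ^ 3 / 3))

/-- Linear interpolant of `f` on `[a, b]`: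
`L(S) = ((b - S)/(b - a)) f(a) + ((S - a)/(b - a)) f(b)`. -/
noncomputable def splineL (f : ℝ → ℝ) (a b S : ℝ) : ℝ :=
  ((b - S) / (b - a)) * f a + ((S - a) / (b - a)) * f b

/-- The weighted curvature integral `∫_a^b G(S) (f″(S))² dS` on a subinterval `[a, b]`. -/
noncomputable def curvInt (f g : ℝ → ℝ) (a b : ℝ) : ℝ :=
  ∫ S in a..b, weightG g a b S * (deriv (deriv f) S) ^ 2

/-- The intensity parameter
`α_h = [(1/(X_n − X_0)) Σ_i h_i ((1/h_i) ∫_{X_i}^{X_{i+1}} G(S)(f″(S))² dS)^{γ/2}]^{2/γ}`. -/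
noncomputable def alphaH (f g : ℝ → ℝ) (γ : ℝ) (n : ℕ) (X : ℕ → ℝ) : ℝ :=
  ((1 / (X n - X 0)) * ∑ i ∈ Finset.range n, (X (i + 1) - X i) *
      ((1 / (X (i + 1) - X i)) * curvInt f g (X i) (X (i + 1))) ^ (γ / 2)) ^ (2 / γ)

/-- The adaptation function
`ρ_i = (1 + (1/(α_h h_i)) ∫_{X_i}^{X_{i+1}} G(S)(f″(S))² dS)^{γ/2}`. -/
noncomputable def rhoAdapt (f g : ℝ → ℝ) (γ : ℝ) (n : ℕ) (X : ℕ → ℝ) (i : ℕ) : ℝ :=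
  (1 + (1 / (alphaH f g γ n X * (X (i + 1) - X i))) * curvInt f g (X i) (X (i + 1))) ^ (γ / 2)

/-! ### Auxiliary lemmas -/

/-- Subadditivity of rpow with exponent in `[0,1]`. -/
lemma my_one_add_rpow_le {t p : ℝ} (ht : 0 ≤ t) (hp0 : 0 ≤ p) (hp1 : p ≤ 1) :
    (1 + t) ^ p ≤ 1 + t ^ p := by
  have h := NNReal.rpow_add_le_add_rpow 1 (⟨t, ht⟩ : NNReal) hp0 hp1
  have h2 := (NNReal.coe_le_coe).2 h
  rw [NNReal.one_rpow] at h2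
  exact h2

/-- A uniform bound for the second derivative on the open interval. -/
lemma my_d2_bound {Xlo Xhi : ℝ} {f : ℝ → ℝ} (hlt : Xlo < Xhi)
    (hf : ContDiffOn ℝ 2 f (Set.Icc Xlo Xhi)) :
    ∃ C₂, 0 ≤ C₂ ∧ ∀ x ∈ Set.Ioo Xlo Xhi, |deriv (deriv f) x| ≤ C₂ := by
  have hU : UniqueDiffOn ℝ (Set.Icc Xlo Xhi) := uniqueDiffOn_Icc hlt
  have hcont : ContinuousOn (iteratedDerivWithin 2 f (Set.Icc Xlo Xhi)) (Set.Icc Xlo Xhi) :=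
    hf.continuousOn_iteratedDerivWithin (le_refl _) hU
  obtain ⟨C, hC⟩ := isCompact_Icc.exists_bound_of_continuousOn hcont
  refine ⟨C, le_trans (norm_nonneg _) (hC Xlo ⟨le_rfl, hlt.le⟩), ?_⟩
  intro x hx
  have hxI : x ∈ Set.Icc Xlo Xhi := Set.Ioo_subset_Icc_self hx
  have hmem : Set.Icc Xlo Xhi ∈ nhds x := Icc_mem_nhds hx.1 hx.2
  have ev : iteratedDerivWithin 1 f (Set.Icc Xlo Xhi) =ᶠ[nhds x] deriv f := by
    filter_upwards [isOpen_Ioo.mem_nhds hx] with y hy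
    rw [iteratedDerivWithin_one,
      derivWithin_of_mem_nhds (Icc_mem_nhds hy.1 hy.2)]
  have e1 : iteratedDerivWithin 2 f (Set.Icc Xlo Xhi) x = deriv (deriv f) x := by
    rw [iteratedDerivWithin_succ, derivWithin_of_mem_nhds hmem, ev.deriv_eq]
  have := hC x hxI
  rw [e1] at this
  simpa [Real.norm_eq_abs] using this

/-- Second-order error bound for linear interpolation. -/
lemma my_spline_err {Xlo Xhi : ℝ} {f : ℝ → ℝ}
    (hf : ContDiffOn ℝ 2 f (Set.Icc Xlo Xhi))
    {C₂ : ℝ} (hC₂ : ∀ x ∈ Set.Ioo Xlo Xhi, |deriv (deriv f) x| ≤ C₂)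
    (hC₂0 : 0 ≤ C₂)
    {a b : ℝ} (ha : Xlo ≤ a) (hab : a < b) (hb : b ≤ Xhi)
    {S : ℝ} (hS : S ∈ Set.Icc a b) :
    |splineL f a b S - f S| ≤ C₂ * (b - a) ^ 2 := by
  have hba : b - a ≠ 0 := sub_ne_zero.2 hab.ne'
  have hIoo : Set.Ioo a b ⊆ Set.Ioo Xlo Xhi := Set.Ioo_subset_Ioo ha hb
  have hIcc : Set.Icc a b ⊆ Set.Icc Xlo Xhi := Set.Icc_subset_Icc ha hb
  have hfc : ContinuousOn f (Set.Icc a b) := hf.continuousOn.mono hIcc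
  have hdiff : ∀ x ∈ Set.Ioo Xlo Xhi, HasDerivAt f (deriv f x) x := by
    intro x hx
    exact ((hf.contDiffAt (Icc_mem_nhds hx.1 hx.2)).differentiableAt
      (by norm_num)).hasDerivAt
  have hf' : ContDiffOn ℝ 1 (deriv f) (Set.Ioo Xlo Xhi) :=
    (hf.mono Set.Ioo_subset_Icc_self).deriv_of_isOpen isOpen_Ioo (by norm_num)
  have hd2 : ∀ x ∈ Set.Ioo Xlo Xhi, HasDerivAt (deriv f) (deriv (deriv f) x) x := by
    intro x hx
    exact ((hf'.differentiableOn one_ne_zero x hx).differentiableAt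
      (isOpen_Ioo.mem_nhds hx)).hasDerivAt
  have hcont' : ContinuousOn (deriv f) (Set.Ioo Xlo Xhi) := hf'.continuousOn
  have key : ∀ u v : ℝ, u ∈ Set.Ioo a b → v ∈ Set.Ioo a b → u < v →
      |deriv f v - deriv f u| ≤ C₂ * (b - a) := by
    intro u v hu hv huv
    have hsub : Set.Icc u v ⊆ Set.Ioo Xlo Xhi := by
      intro y hy
      exact hIoo ⟨lt_of_lt_of_le hu.1 hy.1, lt_of_le_of_lt hy.2 hv.2⟩
    obtain ⟨c, hcm, hc⟩ := exists_hasDerivAt_eq_slope (deriv f) (deriv (deriv f)) huv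
      (hcont'.mono hsub) (fun x hx => hd2 x (hsub (Set.Ioo_subset_Icc_self hx)))
    have hvu : deriv f v - deriv f u = deriv (deriv f) c * (v - u) := by
      rw [hc]; field_simp [sub_ne_zero.2 huv.ne']
    rw [hvu, abs_mul]
    have h1 : |deriv (deriv f) c| ≤ C₂ := hC₂ c (hsub (Set.Ioo_subset_Icc_self hcm))
    have h2 : |v - u| ≤ b - a := by
      rw [abs_of_pos (sub_pos.2 huv)]
      have := hu.1; have := hv.2; linarith
    exact mul_le_mul h1 h2 (abs_nonneg _) hC₂0
  rcases eq_or_lt_of_le hS.1 with hSa | hSa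
  · have : splineL f a b S - f S = 0 := by
      subst hSa; unfold splineL; field_simp; ring
    rw [this]; simpa using mul_nonneg hC₂0 (sq_nonneg _)
  rcases eq_or_lt_of_le hS.2 with hSb | hSb
  · have : splineL f a b S - f S = 0 := by
      subst hSb; unfold splineL; field_simp; ring
    rw [this]; simpa using mul_nonneg hC₂0 (sq_nonneg _)
  have hSa' : S - a ≠ 0 := sub_ne_zero.2 hSa.ne'
  obtain ⟨c₁, hc₁m, hc₁⟩ := exists_hasDerivAt_eq_slope f (deriv f) hab hfc
    (fun x hx => hdiff x (hIoo hx))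
  obtain ⟨c₂, hc₂m, hc₂⟩ := exists_hasDerivAt_eq_slope f (deriv f) hSa
    (hfc.mono (Set.Icc_subset_Icc le_rfl hSb.le))
    (fun x hx => hdiff x (hIoo ⟨hx.1, lt_trans hx.2 hSb⟩))
  have hc₂m' : c₂ ∈ Set.Ioo a b := ⟨hc₂m.1, lt_trans hc₂m.2 hSb⟩
  have h1 : f b = f a + (b - a) * deriv f c₁ := by
    rw [hc₁]; field_simp; ring
  have h2 : f S = f a + (S - a) * deriv f c₂ := by
    rw [hc₂]; field_simp; ring
  have hE : splineL f a b S - f S = (S - a) * (deriv f c₁ - deriv f c₂) := by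
    unfold splineL; rw [h1, h2]; field_simp; ring
  rw [hE, abs_mul]
  have hd : |deriv f c₁ - deriv f c₂| ≤ C₂ * (b - a) := by
    rcases lt_trichotomy c₂ c₁ with h | h | h
    · exact key c₂ c₁ hc₂m' hc₁m h
    · rw [h]; simp; exact mul_nonneg hC₂0 (by linarith)
    · rw [abs_sub_comm]; exact key c₁ c₂ hc₁m hc₂m' h
  have hSa2 : |S - a| ≤ b - a := by
    rw [abs_of_pos (sub_pos.2 hSa)]; linarith [hS.2]
  calc |S - a| * |deriv f c₁ - deriv f c₂| ≤ (b - a) * (C₂ * (b - a)) :=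
        mul_le_mul hSa2 hd (abs_nonneg _) (by linarith)
    _ = C₂ * (b - a) ^ 2 := by ring

lemma my_gpt_mem {Xlo Xhi a b ξ : ℝ} (ha : Xlo ≤ a) (hab : a < b) (hb : b ≤ Xhi)
    (h0 : 0 ≤ ξ) (h1 : ξ ≤ 1) : a + (b - a) * ξ ∈ Set.Icc Xlo Xhi := by
  constructor
  · nlinarith
  · nlinarith

lemma my_weightG_nonneg {Xlo Xhi a b S : ℝ} {g : ℝ → ℝ}
    (hg0 : ∀ x ∈ Set.Icc Xlo Xhi, 0 ≤ g x)
    (ha : Xlo ≤ a) (hab : a < b) (hb : b ≤ Xhi) (hS : S ∈ Set.Icc a b) :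
    0 ≤ weightG g a b S := by
  have hba : 0 < b - a := sub_pos.2 hab
  set τ := (S - a) / (b - a) with hτ
  have hτ0 : 0 ≤ τ := div_nonneg (by linarith [hS.1]) hba.le
  have hτ1 : τ ≤ 1 := by
    rw [hτ, div_le_one hba]; linarith [hS.2]
  apply add_nonneg
  · apply intervalIntegral.integral_nonneg hτ0
    intro ξ hξ
    have h0 : 0 ≤ ξ := hξ.1
    have h1 : ξ ≤ 1 := le_trans hξ.2 hτ1
    apply mul_nonneg (hg0 _ (my_gpt_mem ha hab hb h0 h1))
    apply div_nonneg _ (by norm_num)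
    exact mul_nonneg (sq_nonneg _) (pow_nonneg (by linarith) 3)
  · apply intervalIntegral.integral_nonneg hτ1
    intro ξ hξ
    have h0 : 0 ≤ ξ := le_trans hτ0 hξ.1
    have h1 : ξ ≤ 1 := hξ.2
    apply mul_nonneg (hg0 _ (my_gpt_mem ha hab hb h0 h1))
    apply div_nonneg _ (by norm_num)
    exact mul_nonneg (sq_nonneg _) (pow_nonneg h0 3)

lemma my_curvInt_nonneg {Xlo Xhi a b : ℝ} {f g : ℝ → ℝ}
    (hg0 : ∀ x ∈ Set.Icc Xlo Xhi, 0 ≤ g x)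
    (ha : Xlo ≤ a) (hab : a < b) (hb : b ≤ Xhi) :
    0 ≤ curvInt f g a b := by
  apply intervalIntegral.integral_nonneg hab.le
  intro S hS
  exact mul_nonneg (my_weightG_nonneg hg0 ha hab hb hS) (sq_nonneg _)

/-- Partition points are monotone and stay in `[Xlo, Xhi]`. -/
lemma my_X_bound {Xlo Xhi : ℝ} {n : ℕ} {X : ℕ → ℝ} (hX0 : X 0 = Xlo) (hXn : X n = Xhi)
    (hinc : ∀ i < n, X i < X (i + 1)) :
    ∀ i, i ≤ n → Xlo ≤ X i ∧ X i ≤ Xhi := by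
  have hmono : ∀ i j : ℕ, i ≤ j → j ≤ n → X i ≤ X j := by
    intro i j hij hjn
    induction j with
    | zero => simp [Nat.le_zero.mp hij]
    | succ m ih =>
      rcases Nat.eq_or_lt_of_le hij with h | h
      · rw [h]
      · exact le_trans (ih (Nat.lt_succ_iff.mp h) (le_trans (Nat.le_succ m) hjn))
          (hinc m (by omega)).le
  exact fun i hi => ⟨hX0 ▸ hmono 0 i (Nat.zero_le i) hi, hXn ▸ hmono i n hi le_rfl⟩

/-- The equidistribution equation forces every mesh width to be at most `2(Xhi - Xlo)/n`. -/
lemma my_mesh_bound {Xlo Xhi : ℝ} (hlt : Xlo < Xhi) {f g : ℝ → ℝ}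
    (hg0 : ∀ x ∈ Set.Icc Xlo Xhi, 0 ≤ g x)
    {n : ℕ} (hn : 1 ≤ n) {X : ℕ → ℝ} (hX0 : X 0 = Xlo) (hXn : X n = Xhi)
    (hinc : ∀ i < n, X i < X (i + 1))
    (hEq : ∀ i < n, (X (i + 1) - X i) * rhoAdapt f g (2 / 5) n X i =
        (1 / (n : ℝ)) * ∑ j ∈ Finset.range n, (X (j + 1) - X j) * rhoAdapt f g (2 / 5) n X j) :
    ∀ i < n, X (i + 1) - X i ≤ 2 * (Xhi - Xlo) / n := by
  have hXbd := my_X_bound hX0 hXn hinc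
  have hh : ∀ i < n, 0 < X (i + 1) - X i := fun i hi => sub_pos.2 (hinc i hi)
  have hc : ∀ i < n, 0 ≤ curvInt f g (X i) (X (i + 1)) := fun i hi =>
    my_curvInt_nonneg hg0 (hXbd i hi.le).1 (hinc i hi) (hXbd (i + 1) hi).2
  set B := (1 / (X n - X 0)) * ∑ i ∈ Finset.range n, (X (i + 1) - X i) *
      ((1 / (X (i + 1) - X i)) * curvInt f g (X i) (X (i + 1))) ^ ((2:ℝ) / 5 / 2) with hBdef
  have hαB : alphaH f g (2 / 5) n X = B ^ ((2:ℝ) / (2 / 5)) := rfl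
  have hΛpos : (0:ℝ) < Xhi - Xlo := sub_pos.2 hlt
  have hB0 : 0 ≤ B := by
    apply mul_nonneg
    · rw [hXn, hX0]; positivity
    · apply Finset.sum_nonneg
      intro i hi
      have hi' := Finset.mem_range.mp hi
      exact mul_nonneg (hh i hi').le
        (Real.rpow_nonneg (mul_nonneg (one_div_nonneg.2 (hh i hi').le) (hc i hi')) _)
  have hα0 : 0 ≤ alphaH f g (2 / 5) n X := by
    rw [hαB]; exact Real.rpow_nonneg hB0 _
  have hρ1 : ∀ i < n, 1 ≤ rhoAdapt f g (2 / 5) n X i := by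
    intro i hi
    simp only [rhoAdapt]
    apply Real.one_le_rpow _ (by norm_num)
    have : 0 ≤ 1 / (alphaH f g (2 / 5) n X * (X (i + 1) - X i)) * curvInt f g (X i) (X (i + 1)) :=
      mul_nonneg (one_div_nonneg.2 (mul_nonneg hα0 (hh i hi).le)) (hc i hi)
    linarith
  have hsum_h : ∑ i ∈ Finset.range n, (X (i + 1) - X i) = Xhi - Xlo := by
    rw [Finset.sum_range_sub (fun i => X i), hXn, hX0]
  have hsum : ∑ j ∈ Finset.range n, (X (j + 1) - X j) * rhoAdapt f g (2 / 5) n X j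
      ≤ 2 * (Xhi - Xlo) := by
    by_cases hB : B = 0
    · have hαz : alphaH f g (2 / 5) n X = 0 := by
        rw [hαB, hB]; exact Real.zero_rpow (by norm_num)
      have heq1 : ∀ j ∈ Finset.range n, (X (j + 1) - X j) * rhoAdapt f g (2 / 5) n X j
          = X (j + 1) - X j := by
        intro j _
        simp only [rhoAdapt, hαz]
        norm_num
      rw [Finset.sum_congr rfl heq1, hsum_h]; linarith
    · have hBpos : 0 < B := lt_of_le_of_ne hB0 (Ne.symm hB)
      have hαq : (alphaH f g (2 / 5) n X) ^ ((2:ℝ) / 5 / 2) = B := by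
        rw [hαB, ← Real.rpow_mul hB0]
        norm_num
      have hterm : ∀ j ∈ Finset.range n, (X (j + 1) - X j) * rhoAdapt f g (2 / 5) n X j
          ≤ (X (j + 1) - X j) + B⁻¹ * ((X (j + 1) - X j) *
            ((1 / (X (j + 1) - X j)) * curvInt f g (X j) (X (j + 1))) ^ ((2:ℝ) / 5 / 2)) := by
        intro j hj
        have hj' := Finset.mem_range.mp hj
        have hhj := hh j hj'
        have hcj := hc j hj'
        have hu0 : 0 ≤ (1 / (X (j + 1) - X j)) * curvInt f g (X j) (X (j + 1)) :=
          mul_nonneg (one_div_nonneg.2 hhj.le) hcj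
        have ht0 : 0 ≤ (1 / (alphaH f g (2 / 5) n X * (X (j + 1) - X j)))
            * curvInt f g (X j) (X (j + 1)) :=
          mul_nonneg (one_div_nonneg.2 (mul_nonneg hα0 hhj.le)) hcj
        have hsplit : (1 / (alphaH f g (2 / 5) n X * (X (j + 1) - X j)))
            * curvInt f g (X j) (X (j + 1))
            = (alphaH f g (2 / 5) n X)⁻¹ *
              ((1 / (X (j + 1) - X j)) * curvInt f g (X j) (X (j + 1))) := by
          rw [one_div, mul_inv, one_div]; ring
        have hρ : rhoAdapt f g (2 / 5) n X j ≤ 1 + B⁻¹ *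
            ((1 / (X (j + 1) - X j)) * curvInt f g (X j) (X (j + 1))) ^ ((2:ℝ) / 5 / 2) := by
          simp only [rhoAdapt]
          refine le_trans (my_one_add_rpow_le ht0 (by norm_num) (by norm_num)) ?_
          rw [hsplit, Real.mul_rpow (inv_nonneg.2 hα0) hu0, Real.inv_rpow hα0, hαq]
        calc (X (j + 1) - X j) * rhoAdapt f g (2 / 5) n X j
            ≤ (X (j + 1) - X j) * (1 + B⁻¹ *
              ((1 / (X (j + 1) - X j)) * curvInt f g (X j) (X (j + 1))) ^ ((2:ℝ) / 5 / 2)) :=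
              mul_le_mul_of_nonneg_left hρ hhj.le
          _ = (X (j + 1) - X j) + B⁻¹ * ((X (j + 1) - X j) *
              ((1 / (X (j + 1) - X j)) * curvInt f g (X j) (X (j + 1))) ^ ((2:ℝ) / 5 / 2)) := by
              ring
      have hT : ∑ j ∈ Finset.range n, (X (j + 1) - X j) *
          ((1 / (X (j + 1) - X j)) * curvInt f g (X j) (X (j + 1))) ^ ((2:ℝ) / 5 / 2)
          = (Xhi - Xlo) * B := by
        rw [hBdef, hXn, hX0]
        field_simp
      calc ∑ j ∈ Finset.range n, (X (j + 1) - X j) * rhoAdapt f g (2 / 5) n X j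
          ≤ ∑ j ∈ Finset.range n, ((X (j + 1) - X j) + B⁻¹ * ((X (j + 1) - X j) *
            ((1 / (X (j + 1) - X j)) * curvInt f g (X j) (X (j + 1))) ^ ((2:ℝ) / 5 / 2))) :=
            Finset.sum_le_sum hterm
        _ = (Xhi - Xlo) + B⁻¹ * ((Xhi - Xlo) * B) := by
            rw [Finset.sum_add_distrib, hsum_h, ← Finset.mul_sum, hT]
        _ = 2 * (Xhi - Xlo) := by
            rw [mul_comm (Xhi - Xlo) B, ← mul_assoc, inv_mul_cancel₀ hBpos.ne']; ring
  intro i hi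
  have h1 : X (i + 1) - X i ≤ (X (i + 1) - X i) * rhoAdapt f g (2 / 5) n X i :=
    le_mul_of_one_le_right (hh i hi).le (hρ1 i hi)
  rw [hEq i hi] at h1
  have hn0 : (0:ℝ) < (n:ℝ) := by exact_mod_cast hn
  calc X (i + 1) - X i ≤ (1 / (n:ℝ)) * ∑ j ∈ Finset.range n,
        (X (j + 1) - X j) * rhoAdapt f g (2 / 5) n X j := h1
    _ ≤ (1 / (n:ℝ)) * (2 * (Xhi - Xlo)) :=
        mul_le_mul_of_nonneg_left hsum (by positivity)
    _ = 2 * (Xhi - Xlo) / n := by ring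

/-- Convergence rate of the equidistributed static replication: there is a constant `C > 0`,
independent of `n` and of the interior points, such that for every equidistributed partition
(with `γ = 2/5`) the weighted L² spline error is at most `C n⁻²`. -/
theorem equidistribution_convergence_rate
    (Xlo Xhi : ℝ) (hXlo : 0 < Xlo) (hlt : Xlo < Xhi)
    (f g : ℝ → ℝ)
    (hf : ContDiffOn ℝ 2 f (Set.Icc Xlo Xhi))
    (hg0 : ∀ S ∈ Set.Icc Xlo Xhi, 0 ≤ g S)
    (hgc : ContinuousOn g (Set.Icc Xlo Xhi))
    (hnz : ∃ S ∈ Set.Icc Xlo Xhi, g S * (deriv (deriv f) S) ^ 2 ≠ 0) :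
    ∃ C > 0, ∀ n : ℕ, 1 ≤ n → ∀ X : ℕ → ℝ, X 0 = Xlo → X n = Xhi →
      (∀ i < n, X i < X (i + 1)) →
      (∀ i < n, (X (i + 1) - X i) * rhoAdapt f g (2 / 5) n X i =
        (1 / (n : ℝ)) * ∑ j ∈ Finset.range n, (X (j + 1) - X j) * rhoAdapt f g (2 / 5) n X j) →
      Real.sqrt (∑ i ∈ Finset.range n,
          ∫ S in (X i)..(X (i + 1)), (splineL f (X i) (X (i + 1)) S - f S) ^ 2 * g S)
        ≤ C * ((n : ℝ) ^ 2)⁻¹ := by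
  obtain ⟨C₂, hC₂0, hC₂⟩ := my_d2_bound hlt hf
  obtain ⟨Cg, hCg⟩ := isCompact_Icc.exists_bound_of_continuousOn hgc
  have hCg0 : 0 ≤ Cg := le_trans (norm_nonneg _) (hCg Xlo ⟨le_rfl, hlt.le⟩)
  have hΛpos : (0:ℝ) < Xhi - Xlo := sub_pos.2 hlt
  set D := (Cg + 1) * (C₂ + 1) ^ 2 * 16 * (Xhi - Xlo) ^ 5 with hDdef
  have hD : 0 < D := by
    apply mul_pos _ (pow_pos hΛpos 5)
    apply mul_pos _ (by norm_num : (0:ℝ) < 16)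
    exact mul_pos (by linarith) (pow_pos (by linarith) 2)
  refine ⟨Real.sqrt D, Real.sqrt_pos.2 hD, ?_⟩
  intro n hn X hX0 hXn hinc hEq
  have hmesh := my_mesh_bound hlt hg0 hn hX0 hXn hinc hEq
  have hXbd := my_X_bound hX0 hXn hinc
  have hn0 : (0:ℝ) < (n:ℝ) := by exact_mod_cast hn
  have hsum_h : ∑ i ∈ Finset.range n, (X (i + 1) - X i) = Xhi - Xlo := by
    rw [Finset.sum_range_sub (fun i => X i), hXn, hX0]
  -- per-interval integral bound
  have hI : ∀ i < n, (∫ S in (X i)..(X (i + 1)), (splineL f (X i) (X (i + 1)) S - f S) ^ 2 * g S)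
      ≤ Cg * C₂ ^ 2 * (X (i + 1) - X i) ^ 5 := by
    intro i hi
    have ha : Xlo ≤ X i := (hXbd i hi.le).1
    have hb : X (i + 1) ≤ Xhi := (hXbd (i + 1) hi).2
    have hab : X i < X (i + 1) := hinc i hi
    have hIcc : Set.Icc (X i) (X (i + 1)) ⊆ Set.Icc Xlo Xhi := Set.Icc_subset_Icc ha hb
    have hcontL : Continuous fun S => splineL f (X i) (X (i + 1)) S := by
      unfold splineL; fun_prop
    have hint : IntervalIntegrable
        (fun S => (splineL f (X i) (X (i + 1)) S - f S) ^ 2 * g S) volume (X i) (X (i + 1)) := by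
      apply ContinuousOn.intervalIntegrable
      rw [Set.uIcc_of_le hab.le]
      exact (((hcontL.continuousOn.sub (hf.continuousOn.mono hIcc)).pow 2).mul
        (hgc.mono hIcc))
    have hbnd : ∀ S ∈ Set.Icc (X i) (X (i + 1)),
        (splineL f (X i) (X (i + 1)) S - f S) ^ 2 * g S
          ≤ (C₂ * (X (i + 1) - X i) ^ 2) ^ 2 * Cg := by
      intro S hS
      have he := my_spline_err hf hC₂ hC₂0 ha hab hb hS
      have h1 : (splineL f (X i) (X (i + 1)) S - f S) ^ 2
          ≤ (C₂ * (X (i + 1) - X i) ^ 2) ^ 2 := by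
        rw [← sq_abs]
        exact pow_le_pow_left₀ (abs_nonneg _) he 2
      have h2 : g S ≤ Cg := le_trans (le_abs_self _) (hCg S (hIcc hS))
      exact mul_le_mul h1 h2 (hg0 S (hIcc hS)) (by positivity)
    calc (∫ S in (X i)..(X (i + 1)), (splineL f (X i) (X (i + 1)) S - f S) ^ 2 * g S)
        ≤ ∫ _ in (X i)..(X (i + 1)), (C₂ * (X (i + 1) - X i) ^ 2) ^ 2 * Cg :=
          intervalIntegral.integral_mono_on hab.le hint intervalIntegrable_const hbnd
      _ = (X (i + 1) - X i) * ((C₂ * (X (i + 1) - X i) ^ 2) ^ 2 * Cg) := by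
          rw [intervalIntegral.integral_const, smul_eq_mul]
      _ = Cg * C₂ ^ 2 * (X (i + 1) - X i) ^ 5 := by ring
  -- total bound
  have htot : (∑ i ∈ Finset.range n,
      ∫ S in (X i)..(X (i + 1)), (splineL f (X i) (X (i + 1)) S - f S) ^ 2 * g S)
      ≤ Cg * C₂ ^ 2 * (2 * (Xhi - Xlo) / n) ^ 4 * (Xhi - Xlo) := by
    calc (∑ i ∈ Finset.range n,
        ∫ S in (X i)..(X (i + 1)), (splineL f (X i) (X (i + 1)) S - f S) ^ 2 * g S)
        ≤ ∑ i ∈ Finset.range n, Cg * C₂ ^ 2 * (X (i + 1) - X i) ^ 5 :=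
          Finset.sum_le_sum (fun i hi => hI i (Finset.mem_range.mp hi))
      _ ≤ ∑ i ∈ Finset.range n,
            Cg * C₂ ^ 2 * (2 * (Xhi - Xlo) / n) ^ 4 * (X (i + 1) - X i) := by
          apply Finset.sum_le_sum
          intro i hi
          have hi' := Finset.mem_range.mp hi
          have hhp : 0 < X (i + 1) - X i := sub_pos.2 (hinc i hi')
          have h5 : (X (i + 1) - X i) ^ 5
              ≤ (2 * (Xhi - Xlo) / n) ^ 4 * (X (i + 1) - X i) := by
            calc (X (i + 1) - X i) ^ 5 = (X (i + 1) - X i) ^ 4 * (X (i + 1) - X i) := by ring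
              _ ≤ (2 * (Xhi - Xlo) / n) ^ 4 * (X (i + 1) - X i) :=
                mul_le_mul_of_nonneg_right (pow_le_pow_left₀ hhp.le (hmesh i hi') 4) hhp.le
          calc Cg * C₂ ^ 2 * (X (i + 1) - X i) ^ 5
              ≤ Cg * C₂ ^ 2 * ((2 * (Xhi - Xlo) / n) ^ 4 * (X (i + 1) - X i)) :=
                mul_le_mul_of_nonneg_left h5 (by positivity)
            _ = Cg * C₂ ^ 2 * (2 * (Xhi - Xlo) / n) ^ 4 * (X (i + 1) - X i) := by ring
      _ = Cg * C₂ ^ 2 * (2 * (Xhi - Xlo) / n) ^ 4 * (Xhi - Xlo) := by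
          rw [← Finset.mul_sum, hsum_h]
  have hD2 : Cg * C₂ ^ 2 * (2 * (Xhi - Xlo) / n) ^ 4 * (Xhi - Xlo)
      ≤ (Real.sqrt D * ((n : ℝ) ^ 2)⁻¹) ^ 2 := by
    have hsq : (Real.sqrt D * ((n : ℝ) ^ 2)⁻¹) ^ 2 = D * ((n : ℝ) ^ 4)⁻¹ := by
      rw [mul_pow, Real.sq_sqrt hD.le, inv_pow, ← pow_mul]
    rw [hsq]
    have h5 : Cg * C₂ ^ 2 * (2 * (Xhi - Xlo) / n) ^ 4 * (Xhi - Xlo)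
        = (Cg * C₂ ^ 2 * 16 * (Xhi - Xlo) ^ 5) * ((n : ℝ) ^ 4)⁻¹ := by
      field_simp
      ring
    rw [h5, hDdef]
    apply mul_le_mul_of_nonneg_right _ (by positivity)
    have hK : Cg * C₂ ^ 2 ≤ (Cg + 1) * (C₂ + 1) ^ 2 := by nlinarith
    nlinarith [pow_pos hΛpos 5, pow_nonneg hΛpos.le 5]
  have hle := Real.sqrt_le_sqrt (le_trans htot hD2)
  rwa [Real.sqrt_sq (by positivity)] at hle
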